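/- Ball's symmetric plank theorem in the plane with the ℓ∞ norm: given unit-norm linear functionals φ_1,...,φ_m on (ℝ², ‖·‖_∞), real numbers t_1,...,t_m, and positive weights w_1,...,w_m with Σ w_i = 1, there exists x ∈ [-1,1]² such that |φ_i(x) - t_i| ≥ w_i for every i. -/

import Mathlib

namespace BallPlankAux

variable {m : ℕ}

/-- The sign (as a real number) attached to a boolean vector entry. -/
def sgn (ε : Fin m → Bool) (i : Fin m) : ℝ := if ε i then 1 else -1

lemma sgn_abs (ε : Fin m → Bool) (i : Fin m) : |sgn ε i| = 1 := by
  unfold sgn; split <;> norm_num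

lemma sgn_mul_self (ε : Fin m → Bool) (i : Fin m) : sgn ε i * sgn ε i = 1 := by
  unfold sgn; split <;> norm_num

lemma sum_sgn_update (ε : Fin m → Bool) (k : Fin m) (g : Fin m → ℝ) :
    ∑ r, sgn (Function.update ε k (!(ε k))) r * g r
      = (∑ r, sgn ε r * g r) - 2 * (sgn ε k * g k) := by
  classical
  have hpt : ∀ r : Fin m, sgn (Function.update ε k (!(ε k))) r * g r
      = sgn ε r * g r - (if r = k then 2 * (sgn ε k * g k) else 0) := by
    intro r
    by_cases h : r = k
    · subst h
      have h1 : Function.update ε r (!(ε r)) r = !(ε r) := Function.update_self _ _ _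
      unfold sgn
      rw [h1, if_pos rfl]
      cases hb : ε r <;> simp [hb] <;> ring
    · have h1 : Function.update ε k (!(ε k)) r = ε r := Function.update_of_ne h _ _
      unfold sgn
      rw [h1, if_neg h]
      ring
  calc ∑ r, sgn (Function.update ε k (!(ε k))) r * g r
      = ∑ r, (sgn ε r * g r - (if r = k then 2 * (sgn ε k * g k) else 0)) :=
        Finset.sum_congr rfl fun r _ => hpt r
    _ = (∑ r, sgn ε r * g r) - ∑ r, (if r = k then 2 * (sgn ε k * g k) else 0) :=
        Finset.sum_sub_distrib _ _
    _ = (∑ r, sgn ε r * g r) - 2 * (sgn ε k * g k) := by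
        rw [Finset.sum_ite_eq' Finset.univ k (fun _ => 2 * (sgn ε k * g k))]
        simp

end BallPlankAux

set_option maxHeartbeats 1000000 in
open BallPlankAux in
/-- Ball's symmetric plank theorem in the plane with the `ℓ∞` norm: unit functionals
are exactly `x ↦ a*x₁ + b*x₂` with `|a| + |b| = 1`. -/
theorem ball_symmetric_plank_linf (m : ℕ) (a b t w : Fin m → ℝ)
    (hunit : ∀ i, |a i| + |b i| = 1) (hw : ∀ i, 0 < w i) (hsum : ∑ i, w i = 1) :
    ∃ x : ℝ × ℝ, x.1 ∈ Set.Icc (-1 : ℝ) 1 ∧ x.2 ∈ Set.Icc (-1 : ℝ) 1 ∧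
      ∀ i, w i ≤ |a i * x.1 + b i * x.2 - t i| := by
  classical
  obtain ⟨A, hA_def⟩ : ∃ x : ℝ, x = ∑ i, w i * |a i| := ⟨_, rfl⟩
  obtain ⟨B, hB_def⟩ : ∃ x : ℝ, x = ∑ i, w i * |b i| := ⟨_, rfl⟩
  have hA0 : 0 ≤ A := by
    rw [hA_def]; exact Finset.sum_nonneg fun i _ => mul_nonneg (hw i).le (abs_nonneg _)
  have hB0 : 0 ≤ B := by
    rw [hB_def]; exact Finset.sum_nonneg fun i _ => mul_nonneg (hw i).le (abs_nonneg _)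
  have hAB : A + B = 1 := by
    rw [hA_def, hB_def, ← Finset.sum_add_distrib]
    have h1 : ∀ i ∈ Finset.univ, w i * |a i| + w i * |b i| = w i := by
      intro i _
      rw [← mul_add, hunit i, mul_one]
    rw [Finset.sum_congr rfl h1, hsum]
  have hA1 : A ≤ 1 := by linarith
  have hB1 : B ≤ 1 := by linarith
  obtain ⟨ε, -, hmax⟩ := Finset.exists_max_image (Finset.univ : Finset (Fin m → Bool))
    (fun ε => A⁻¹ * (∑ r, sgn ε r * (w r * a r)) ^ 2
        + B⁻¹ * (∑ r, sgn ε r * (w r * b r)) ^ 2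
        - 2 * ∑ r, sgn ε r * (w r * t r))
    ⟨fun _ => true, Finset.mem_univ _⟩
  -- bounds on the candidate point coordinates
  have habsX : |∑ r, sgn ε r * (w r * a r)| ≤ A := by
    rw [hA_def]
    calc |∑ r, sgn ε r * (w r * a r)| ≤ ∑ r, |sgn ε r * (w r * a r)| :=
          Finset.abs_sum_le_sum_abs _ _
      _ = ∑ r, w r * |a r| := Finset.sum_congr rfl fun r _ => by
          rw [abs_mul, sgn_abs, one_mul, abs_mul, abs_of_pos (hw r)]
  have habsY : |∑ r, sgn ε r * (w r * b r)| ≤ B := by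
    rw [hB_def]
    calc |∑ r, sgn ε r * (w r * b r)| ≤ ∑ r, |sgn ε r * (w r * b r)| :=
          Finset.abs_sum_le_sum_abs _ _
      _ = ∑ r, w r * |b r| := Finset.sum_congr rfl fun r _ => by
          rw [abs_mul, sgn_abs, one_mul, abs_mul, abs_of_pos (hw r)]
  have hbound : ∀ (C : ℝ) (Z : ℝ), 0 ≤ C → C ≤ 1 → |Z| ≤ C → |C⁻¹ * Z| ≤ 1 := by
    intro C Z hC0 hC1 hZ
    rcases eq_or_lt_of_le hC0 with h | h
    · have hZ0 : Z = 0 := by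
        have : |Z| ≤ 0 := by rw [h]; exact hZ
        have := le_antisymm this (abs_nonneg Z)
        exact abs_eq_zero.mp this
      rw [hZ0, mul_zero, abs_zero]; norm_num
    · have : |C⁻¹ * Z| = C⁻¹ * |Z| := by
        rw [abs_mul, abs_of_pos (inv_pos.mpr h)]
      rw [this]
      calc C⁻¹ * |Z| ≤ C⁻¹ * C := mul_le_mul_of_nonneg_left hZ (inv_nonneg.mpr hC0)
        _ = 1 := inv_mul_cancel₀ h.ne'
  have hx1 : |A⁻¹ * (∑ r, sgn ε r * (w r * a r))| ≤ 1 := hbound A _ hA0 hA1 habsX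
  have hx2 : |B⁻¹ * (∑ r, sgn ε r * (w r * b r))| ≤ 1 := hbound B _ hB0 hB1 habsY
  -- the main per-plank estimate
  have hmain : ∀ k : Fin m, w k ≤
      |a k * (A⁻¹ * (∑ r, sgn ε r * (w r * a r)))
        + b k * (B⁻¹ * (∑ r, sgn ε r * (w r * b r))) - t k| := by
    intro k
    have hk := hmax (Function.update ε k (!(ε k))) (Finset.mem_univ _)
    rw [sum_sgn_update ε k, sum_sgn_update ε k, sum_sgn_update ε k] at hk
    obtain ⟨X, hX_def⟩ : ∃ x : ℝ, x = ∑ r, sgn ε r * (w r * a r) := ⟨_, rfl⟩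
    obtain ⟨Y, hY_def⟩ : ∃ x : ℝ, x = ∑ r, sgn ε r * (w r * b r) := ⟨_, rfl⟩
    obtain ⟨T, hT_def⟩ : ∃ x : ℝ, x = ∑ r, sgn ε r * (w r * t r) := ⟨_, rfl⟩
    obtain ⟨s, hs_def⟩ : ∃ x : ℝ, x = sgn ε k := ⟨_, rfl⟩
    rw [← hX_def, ← hY_def, ← hT_def, ← hs_def] at hk
    rw [← hX_def, ← hY_def]
    have hss : s * s = 1 := by rw [hs_def]; exact sgn_mul_self ε k
    have hsabs : |s| = 1 := by rw [hs_def]; exact sgn_abs ε k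
    -- expand the flip inequality
    have h0 : 0 ≤ (A⁻¹ * X ^ 2 + B⁻¹ * Y ^ 2 - 2 * T)
        - (A⁻¹ * (X - 2 * (s * (w k * a k))) ^ 2
          + B⁻¹ * (Y - 2 * (s * (w k * b k))) ^ 2
          - 2 * (T - 2 * (s * (w k * t k)))) := by linarith
    have hexp : (A⁻¹ * X ^ 2 + B⁻¹ * Y ^ 2 - 2 * T)
        - (A⁻¹ * (X - 2 * (s * (w k * a k))) ^ 2
          + B⁻¹ * (Y - 2 * (s * (w k * b k))) ^ 2
          - 2 * (T - 2 * (s * (w k * t k))))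
        = 4 * w k * (s * (A⁻¹ * a k * X + B⁻¹ * b k * Y - t k))
          - 4 * w k ^ 2 * (A⁻¹ * a k ^ 2 + B⁻¹ * b k ^ 2) * (s * s) := by ring
    rw [hexp, hss, mul_one] at h0
    -- diagonal lower bound
    have hak_le : w k * |a k| ≤ A := by
      rw [hA_def]
      exact Finset.single_le_sum (fun i _ => mul_nonneg (hw i).le (abs_nonneg _))
        (Finset.mem_univ k)
    have hbk_le : w k * |b k| ≤ B := by
      rw [hB_def]
      exact Finset.single_le_sum (fun i _ => mul_nonneg (hw i).le (abs_nonneg _))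
        (Finset.mem_univ k)
    have hdiag : 1 ≤ A⁻¹ * a k ^ 2 + B⁻¹ * b k ^ 2 := by
      by_cases ha : a k = 0
      · have hb1 : |b k| = 1 := by
          have h := hunit k
          rw [ha, abs_zero, zero_add] at h
          exact h
        have hBpos : 0 < B := by
          have h2 : 0 < w k * |b k| := by rw [hb1, mul_one]; exact hw k
          exact lt_of_lt_of_le h2 hbk_le
        have h2 : B⁻¹ * B = 1 := inv_mul_cancel₀ hBpos.ne'
        have h3 : 0 ≤ B⁻¹ * (1 - B) := mul_nonneg (inv_nonneg.mpr hB0) (by linarith)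
        have hb2 : b k ^ 2 = 1 := by rw [← sq_abs, hb1, one_pow]
        have ha2 : a k ^ 2 = 0 := by rw [ha]; ring
        rw [ha2, hb2, mul_zero, zero_add, mul_one]
        nlinarith [h2, h3]
      · by_cases hb : b k = 0
        · have ha1 : |a k| = 1 := by
            have h := hunit k
            rw [hb, abs_zero, add_zero] at h
            exact h
          have hApos : 0 < A := by
            have h2 : 0 < w k * |a k| := by rw [ha1, mul_one]; exact hw k
            exact lt_of_lt_of_le h2 hak_le
          have h2 : A⁻¹ * A = 1 := inv_mul_cancel₀ hApos.ne'
          have h3 : 0 ≤ A⁻¹ * (1 - A) := mul_nonneg (inv_nonneg.mpr hA0) (by linarith)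
          have ha2 : a k ^ 2 = 1 := by rw [← sq_abs, ha1, one_pow]
          have hb2 : b k ^ 2 = 0 := by rw [hb]; ring
          rw [ha2, hb2, mul_zero, add_zero, mul_one]
          nlinarith [h2, h3]
        · have hApos : 0 < A := lt_of_lt_of_le (mul_pos (hw k) (abs_pos.mpr ha)) hak_le
          have hBpos : 0 < B := lt_of_lt_of_le (mul_pos (hw k) (abs_pos.mpr hb)) hbk_le
          have hαA : A⁻¹ * A = 1 := inv_mul_cancel₀ hApos.ne'
          have hβB : B⁻¹ * B = 1 := inv_mul_cancel₀ hBpos.ne'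
          have hprod : A * B ≤ a k ^ 2 * B + b k ^ 2 * A := by
            have hp : a k ^ 2 = |a k| ^ 2 := (sq_abs _).symm
            have hq : b k ^ 2 = |b k| ^ 2 := (sq_abs _).symm
            have h1 : |b k| = 1 - |a k| := by linarith [hunit k]
            have h2 : B = 1 - A := by linarith
            rw [hp, hq, h1, h2]
            nlinarith [sq_nonneg (|a k| - A)]
          have h4 : A⁻¹ * B⁻¹ * (A * B) ≤ A⁻¹ * B⁻¹ * (a k ^ 2 * B + b k ^ 2 * A) :=
            mul_le_mul_of_nonneg_left hprod
              (mul_nonneg (inv_nonneg.mpr hA0) (inv_nonneg.mpr hB0))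
          have h5 : A⁻¹ * B⁻¹ * (A * B) = 1 := by
            have h6 : A⁻¹ * B⁻¹ * (A * B) = (A⁻¹ * A) * (B⁻¹ * B) := by ring
            rw [h6, hαA, hβB, one_mul]
          have h7 : A⁻¹ * B⁻¹ * (a k ^ 2 * B + b k ^ 2 * A)
              = (B⁻¹ * B) * (A⁻¹ * a k ^ 2) + (A⁻¹ * A) * (B⁻¹ * b k ^ 2) := by ring
          rw [h7, hαA, hβB, one_mul, one_mul] at h4
          linarith
    -- divide the flip inequality by 4 * w k
    have h8 : 4 * w k * (w k * (A⁻¹ * a k ^ 2 + B⁻¹ * b k ^ 2))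
        ≤ 4 * w k * (s * (A⁻¹ * a k * X + B⁻¹ * b k * Y - t k)) := by nlinarith [h0]
    have h9 : w k * (A⁻¹ * a k ^ 2 + B⁻¹ * b k ^ 2)
        ≤ s * (A⁻¹ * a k * X + B⁻¹ * b k * Y - t k) :=
      le_of_mul_le_mul_left h8 (by linarith [hw k])
    have h10 : w k ≤ w k * (A⁻¹ * a k ^ 2 + B⁻¹ * b k ^ 2) := by
      nlinarith [hw k, hdiag]
    have h11 : w k ≤ s * (A⁻¹ * a k * X + B⁻¹ * b k * Y - t k) := le_trans h10 h9
    calc w k ≤ s * (A⁻¹ * a k * X + B⁻¹ * b k * Y - t k) := h11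
      _ ≤ |s * (A⁻¹ * a k * X + B⁻¹ * b k * Y - t k)| := le_abs_self _
      _ = |A⁻¹ * a k * X + B⁻¹ * b k * Y - t k| := by rw [abs_mul, hsabs, one_mul]
      _ = |a k * (A⁻¹ * X) + b k * (B⁻¹ * Y) - t k| := by congr 1; ring
  exact ⟨(A⁻¹ * (∑ r, sgn ε r * (w r * a r)), B⁻¹ * (∑ r, sgn ε r * (w r * b r))),
    Set.mem_Icc.mpr (abs_le.mp hx1), Set.mem_Icc.mpr (abs_le.mp hx2), hmain⟩
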